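/- Let Γ be a finite simplicial graph and let x, z, u be vertices with u ≤ x, u ≠ x, z ∉ st(x), and z not dominated by x. Let D be a z-component with x ∉ D and u ∉ D. If the connected component of Γ∖st(u) containing z contains no vertex of D (note that z ∉ st(u) automatically, so this component exists), then D is a union of u-components. -/

import Mathlib

open SimpleGraph

namespace RaagPaper

/-- The star of a vertex: the vertex together with its neighbours. -/
def star {V : Type} (G : SimpleGraph V) (v : V) : Set V := insert v (G.neighborSet v)

/-- Domination: `u ≤ v` iff `lk(u) ⊆ st(v)`. -/
def Dom {V : Type} (G : SimpleGraph V) (u v : V) : Prop := G.neighborSet u ⊆ star G v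

/-- Domination-equivalence of vertices. -/
def EquivDom {V : Type} (G : SimpleGraph V) (u v : V) : Prop := Dom G u v ∧ Dom G v u

/-- The domination-equivalence class of a vertex. -/
def eqClass {V : Type} (G : SimpleGraph V) (x : V) : Set V := {v | EquivDom G v x}

/-- `C` is (the vertex set of) a connected component of the subgraph of `G` induced on `S`. -/
def IsCC {V : Type} (G : SimpleGraph V) (S : Set V) (C : Set V) : Prop :=
  ∃ v : S, C = {w : V | ∃ h : w ∈ S, (G.induce S).Reachable ⟨w, h⟩ v}

/-- `(x,y|z)` is a separating intersection of links (SIL). -/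
def IsSIL {V : Type} (G : SimpleGraph V) (x y z : V) : Prop :=
  x ≠ y ∧ x ≠ z ∧ y ≠ z ∧ ¬ G.Adj x y ∧ ¬ G.Adj x z ∧ ¬ G.Adj y z ∧
  ∀ C : Set V, IsCC G ((G.neighborSet x ∩ G.neighborSet y)ᶜ) C → z ∈ C → x ∉ C ∧ y ∉ C

/-- The graph has no SIL. -/
def HasNoSIL {V : Type} (G : SimpleGraph V) : Prop := ∀ x y z, ¬ IsSIL G x y z

/-- `D` is a (possibly empty) union of connected components of `Γ ∖ st(x)`. -/
def IsUnionCC {V : Type} (G : SimpleGraph V) (x : V) (D : Set V) : Prop :=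
  ∃ 𝒞 : Set (Set V), (∀ C ∈ 𝒞, IsCC G ((star G x)ᶜ) C) ∧ D = ⋃₀ 𝒞

end RaagPaper

lemma reach_mem_aux {V : Type} (G : SimpleGraph V) (S P : Set V)
    (hstep : ∀ d ∈ P, ∀ w ∈ S, G.Adj w d → w ∈ P) :
    ∀ {a b : S} (_ : (G.induce S).Walk a b), (b : V) ∈ P → (a : V) ∈ P := by
  intro a b p
  induction p with
  | nil => exact id
  | cons h q ih =>
    intro hb
    exact hstep _ (ih hb) _ (Subtype.mem _) (by simpa using h)

open RaagPaper in
theorem statement13 {V : Type} [Fintype V] (G : SimpleGraph V) (x z u : V)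
    (hux : Dom G u x) (hune : u ≠ x) (hzst : z ∉ star G x) (hznd : ¬ Dom G z x)
    (D : Set V) (hD : IsCC G ((star G z)ᶜ) D) (hxD : x ∉ D) (huD : u ∉ D)
    (hcomp : ∀ E : Set V, IsCC G ((star G u)ᶜ) E → z ∈ E → E ∩ D = ∅) :
    IsUnionCC G u D := by
  classical
  -- basic facts
  have hzx : z ≠ x := fun h => hzst (h ▸ Set.mem_insert _ _)
  have hnxz : ¬ G.Adj x z := fun h => hzst (Set.mem_insert_iff.2 (Or.inr h))
  have hxstz : x ∉ star G z := by
    intro h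
    rcases Set.mem_insert_iff.1 h with h | h
    · exact hzx h.symm
    · exact hnxz (G.adj_symm h)
  have hzu : z ≠ u := fun h => hznd (h ▸ hux)
  have hzstu : z ∉ star G u := by
    intro h
    rcases Set.mem_insert_iff.1 h with h | h
    · exact hzu h
    · exact hzst (hux h)
  obtain ⟨⟨v, hv⟩, hDeq⟩ := hD
  have hDsub : D ⊆ (star G z)ᶜ := by
    intro w hw
    rw [hDeq] at hw
    exact hw.1
  have hDedge : ∀ d ∈ D, ∀ w, w ∉ star G z → G.Adj w d → w ∈ D := by
    intro d hd w hw hadj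
    rw [hDeq] at hd ⊢
    obtain ⟨hd', hr⟩ := hd
    exact ⟨hw, (Adj.reachable (by simpa using hadj :
      (G.induce ((star G z)ᶜ)).Adj ⟨w, hw⟩ ⟨d, hd'⟩)).trans hr⟩
  -- Claim (a): D is disjoint from st(u)
  have hDu : ∀ d ∈ D, d ∉ star G u := by
    intro d hd hmem
    rcases Set.mem_insert_iff.1 hmem with h | h
    · exact huD (h ▸ hd)
    · have hdx : d ∈ star G x := hux h
      rcases Set.mem_insert_iff.1 hdx with h' | h'
      · exact hxD (h' ▸ hd)
      · exact hxD (hDedge d hd x hxstz h')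
  -- Claim (b): D is closed under edges within (st u)ᶜ
  have hstep : ∀ d ∈ D, ∀ w ∈ (star G u)ᶜ, G.Adj w d → w ∈ D := by
    intro d hd w hw hadj
    by_cases hwz : w ∈ star G z
    · rcases Set.mem_insert_iff.1 hwz with rfl | hwz'
      · exact absurd (Set.mem_insert_iff.2 (Or.inr hadj)) (hDsub hd)
      · -- w ∈ lk(z): then d is in the u-component of z, contradiction
        set E : Set V := {a : V | ∃ h : a ∈ (star G u)ᶜ,
          (G.induce ((star G u)ᶜ)).Reachable ⟨a, h⟩ ⟨z, hzstu⟩} with hEdef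
        have hE : IsCC G ((star G u)ᶜ) E := ⟨⟨z, hzstu⟩, rfl⟩
        have hzE : z ∈ E := ⟨hzstu, Reachable.refl _⟩
        have hemp := hcomp E hE hzE
        have hdu : d ∈ (star G u)ᶜ := hDu d hd
        have hr1 : (G.induce ((star G u)ᶜ)).Adj ⟨d, hdu⟩ ⟨w, hw⟩ := by
          simpa using G.adj_symm hadj
        have hr2 : (G.induce ((star G u)ᶜ)).Adj ⟨w, hw⟩ ⟨z, hzstu⟩ := by
          simpa using G.adj_symm hwz'
        have hdE : d ∈ E := ⟨hdu, hr1.reachable.trans hr2.reachable⟩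
        exact absurd (hemp ▸ (Set.mem_inter hdE hd)) (Set.notMem_empty d)
    · exact hDedge d hd w hwz hadj
  -- Conclusion
  refine ⟨{C | IsCC G ((star G u)ᶜ) C ∧ C ⊆ D}, fun C hC => hC.1, ?_⟩
  ext a
  constructor
  · intro ha
    have hau : a ∈ (star G u)ᶜ := hDu a ha
    refine Set.mem_sUnion.2 ⟨{w : V | ∃ h : w ∈ (star G u)ᶜ,
      (G.induce ((star G u)ᶜ)).Reachable ⟨w, h⟩ ⟨a, hau⟩}, ⟨⟨⟨a, hau⟩, rfl⟩, ?_⟩,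
      ⟨hau, Reachable.refl _⟩⟩
    rintro w ⟨hw, hr⟩
    obtain ⟨p⟩ := hr
    exact reach_mem_aux G ((star G u)ᶜ) D hstep p ha
  · rintro ⟨C, ⟨_, hCD⟩, haC⟩
    exact hCD haC
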